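/- Define κ(β) := (1/2)·( 1/(β²-1) + (6/(π²β³(β+1)))·( Γ''(x)/Γ(x) - (Γ'(x)/Γ(x))² ) - β²/(β²-1)² ) where x = (β-1)/β. Then κ(β) ~ (3/(2π²) - 1/8)·(β-1)^{-2} as β ↓ 1, and κ(β) ~ (6ζ(3)/π² - 1/2)·β^{-5} as β → ∞. -/

import Mathlib

open Real Filter Set Topology

namespace SuscAux

noncomputable def ψ0 : ℝ → ℝ := fun x =>
  -eulerMascheroniConstant - 1/x + ∑' k : ℕ, (1/((k:ℝ)+1) - 1/(x+((k:ℝ)+1)))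
noncomputable def ψ1 : ℝ → ℝ := fun x => ∑' k : ℕ, 1/(x+(k:ℝ))^2
noncomputable def ψ2 : ℝ → ℝ := fun x => ∑' k : ℕ, -2/(x+(k:ℝ))^3

lemma summable_base (p : ℕ) (hp : 2 ≤ p) : Summable (fun n : ℕ => 1/((n:ℝ)+1)^p) := by
  have := (summable_one_div_nat_pow (p := p)).2 hp
  have h2 := (summable_nat_add_iff (f := fun n : ℕ => 1/(n:ℝ)^p) 1).2 this
  refine h2.congr fun n => ?_
  push_cast; ring

lemma bound_aux {a : ℝ} (ha : 0 < a) (p : ℕ) (k : ℕ) :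
    1/(a+((k:ℝ)+1))^p ≤ (1/(min a 1)^p) * (1/((k:ℝ)+1)^p) := by
  have hm0 : 0 < min a 1 := lt_min ha one_pos
  have key : min a 1 * ((k:ℝ)+1) ≤ a + ((k:ℝ)+1) := by
    have h1 : min a 1 ≤ a := min_le_left _ _
    have h2 : min a 1 ≤ 1 := min_le_right _ _
    nlinarith [Nat.cast_nonneg (α := ℝ) k]
  have h1 : (0:ℝ) < min a 1 * ((k:ℝ)+1) := by positivity
  calc 1/(a+((k:ℝ)+1))^p ≤ 1/(min a 1*((k:ℝ)+1))^p :=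
        one_div_le_one_div_of_le (by positivity) (pow_le_pow_left₀ h1.le key p)
    _ = (1/(min a 1)^p) * (1/((k:ℝ)+1)^p) := by rw [mul_pow]; ring

lemma summable_aux {a : ℝ} (ha : 0 < a) {p : ℕ} (hp : 2 ≤ p) :
    Summable (fun k : ℕ => 1/(a+(k:ℝ))^p) := by
  rw [← summable_nat_add_iff 1]
  refine Summable.of_nonneg_of_le (fun k => by positivity) (fun k => ?_)
    ((summable_base p hp).mul_left (1/(min a 1)^p))
  push_cast
  exact bound_aux ha p k

lemma psi0_term_nonneg {x : ℝ} (hx : 0 < x) (k : ℕ) :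
    0 ≤ 1/((k:ℝ)+1) - 1/(x+((k:ℝ)+1)) := by
  have h1 : (0:ℝ) < (k:ℝ)+1 := by positivity
  rw [sub_nonneg]
  exact one_div_le_one_div_of_le h1 (by linarith)

lemma psi0_term_le {x : ℝ} (hx : 0 < x) (k : ℕ) :
    1/((k:ℝ)+1) - 1/(x+((k:ℝ)+1)) ≤ x * (1/((k:ℝ)+1)^2) := by
  have h1 : (0:ℝ) < (k:ℝ)+1 := by positivity
  have h2 : (0:ℝ) < x+((k:ℝ)+1) := by positivity
  have e : 1/((k:ℝ)+1) - 1/(x+((k:ℝ)+1)) = x / (((k:ℝ)+1)*(x+((k:ℝ)+1))) := by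
    field_simp
    ring
  rw [e]
  calc x / (((k:ℝ)+1)*(x+((k:ℝ)+1))) ≤ x / (((k:ℝ)+1)*((k:ℝ)+1)) := by
        apply div_le_div_of_nonneg_left hx.le (by positivity)
        nlinarith
    _ = x * (1/((k:ℝ)+1)^2) := by rw [pow_two]; field_simp

lemma summable_psi0 {x : ℝ} (hx : 0 < x) :
    Summable (fun k : ℕ => 1/((k:ℝ)+1) - 1/(x+((k:ℝ)+1))) :=
  Summable.of_nonneg_of_le (psi0_term_nonneg hx) (psi0_term_le hx)
    ((summable_base 2 le_rfl).mul_left x)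

lemma tuo_succ {F : ℕ → ℝ → ℝ} {g : ℝ → ℝ} {s : Set ℝ}
    (h : TendstoUniformlyOn F g atTop s) :
    TendstoUniformlyOn (fun n => F (n+1)) g atTop s :=
  fun u hu => (tendsto_add_atTop_nat 1).eventually (h u hu)

lemma tuo_self (h : ℝ → ℝ) (s : Set ℝ) :
    TendstoUniformlyOn (fun _ : ℕ => h) h atTop s := by
  intro u hu
  filter_upwards with n x _
  exact refl_mem_uniformity hu

lemma tluo_helper {F : ℕ → ℝ → ℝ} {g : ℝ → ℝ}
    (h : ∀ a b : ℝ, 0 < a → TendstoUniformlyOn F g atTop (Ioo a b)) :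
    TendstoLocallyUniformlyOn F g atTop (Ioi 0) := by
  intro u hu x hx
  simp only [mem_Ioi] at hx
  refine ⟨Ioo (x/2) (x+1), ?_, h (x/2) (x+1) (by linarith) u hu⟩
  exact mem_nhdsWithin_of_mem_nhds (Ioo_mem_nhds (by linarith) (by linarith))

-- derivative of single terms
lemma hasDerivAt_inv_term {x : ℝ} (k : ℕ) (hx : 0 < x) :
    HasDerivAt (fun y : ℝ => 1/(y+(k:ℝ))) (-(1/(x+(k:ℝ))^2)) x := by
  have hne : x + (k:ℝ) ≠ 0 := by positivity
  have h := ((hasDerivAt_id x).add_const (k:ℝ)).fun_inv hne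
  have e : -(1/(x+(k:ℝ))^2) = -1/(x+(k:ℝ))^2 := by ring
  rw [e]
  simpa [one_div] using h

lemma hasDerivAt_sq_term {x : ℝ} (k : ℕ) (hx : 0 < x) :
    HasDerivAt (fun y : ℝ => 1/(y+(k:ℝ))^2) (-2/(x+(k:ℝ))^3) x := by
  have hne : x + (k:ℝ) ≠ 0 := by positivity
  have h := (((hasDerivAt_id x).add_const (k:ℝ)).fun_pow 2).fun_inv (pow_ne_zero 2 hne)
  have h2 : HasDerivAt (fun y:ℝ => 1/(y+(k:ℝ))^2)
      (-(((2:ℕ):ℝ) * (x + (k:ℝ)) ^ (2-1) * 1) / ((x + (k:ℝ)) ^ 2) ^ 2) x := by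
    simpa [one_div] using h
  convert h2 using 1
  field_simp
  ring

lemma hasDerivAt_log_term {x : ℝ} (k : ℕ) (hx : 0 < x) :
    HasDerivAt (fun y : ℝ => Real.log (y+(k:ℝ))) (1/(x+(k:ℝ))) x := by
  have hne : x + (k:ℝ) ≠ 0 := by positivity
  have h := ((hasDerivAt_id x).add_const (k:ℝ)).log hne
  simpa [one_div] using h




noncomputable def Tn (n : ℕ) : ℝ → ℝ := fun x => ∑ k ∈ Finset.range n, 1/(x+(k:ℝ))^2
noncomputable def Un (n : ℕ) : ℝ → ℝ := fun x => ∑ k ∈ Finset.range n, -2/(x+(k:ℝ))^3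
noncomputable def Dn (n : ℕ) : ℝ → ℝ := fun x => Real.log n - ∑ k ∈ Finset.range (n+1), 1/(x+(k:ℝ))
noncomputable def Ln (n : ℕ) : ℝ → ℝ := fun x =>
  x * Real.log n + Real.log (Nat.factorial n) - ∑ k ∈ Finset.range (n+1), Real.log (x+(k:ℝ))

lemma harmonic_cast (n : ℕ) : ((harmonic n : ℚ) : ℝ) = ∑ i ∈ Finset.range n, 1/((i:ℝ)+1) := by
  unfold harmonic
  push_cast
  simp [one_div]

lemma hasDerivAt_Tn {x : ℝ} (hx : 0 < x) (n : ℕ) :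
    HasDerivAt (Tn n) (Un n x) x := by
  apply HasDerivAt.fun_sum
  intro k _
  exact hasDerivAt_sq_term k hx

lemma hasDerivAt_Dn {x : ℝ} (hx : 0 < x) (n : ℕ) :
    HasDerivAt (Dn n) (Tn (n+1) x) x := by
  have hs : HasDerivAt (fun y => ∑ k ∈ Finset.range (n+1), 1/(y+(k:ℝ)))
      (∑ k ∈ Finset.range (n+1), -(1/(x+(k:ℝ))^2)) x :=
    HasDerivAt.fun_sum (fun k _ => hasDerivAt_inv_term k hx)
  have h := hs.const_sub (Real.log n)
  have e : -∑ k ∈ Finset.range (n+1), -(1/(x+(k:ℝ))^2) = Tn (n+1) x := by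
    simp [Tn]
  rw [e] at h
  exact h

lemma hasDerivAt_Ln {x : ℝ} (hx : 0 < x) (n : ℕ) :
    HasDerivAt (Ln n) (Dn n x) x := by
  have h1 : HasDerivAt (fun y : ℝ => y * Real.log n + Real.log (Nat.factorial n))
      (Real.log n) x := by
    simpa using ((hasDerivAt_id x).mul_const (Real.log n)).add_const (Real.log (Nat.factorial n))
  have hs : HasDerivAt (fun y => ∑ k ∈ Finset.range (n+1), Real.log (y+(k:ℝ)))
      (∑ k ∈ Finset.range (n+1), 1/(x+(k:ℝ))) x :=
    HasDerivAt.fun_sum (fun k _ => hasDerivAt_log_term k hx)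
  exact h1.sub hs




lemma mono_term {a x : ℝ} (ha : 0 < a) (hax : a ≤ x) (k p : ℕ) :
    1/(x+(k:ℝ))^p ≤ 1/(a+(k:ℝ))^p := by
  have h1 : (0:ℝ) < a + k := by positivity
  exact one_div_le_one_div_of_le (by positivity) (by apply pow_le_pow_left₀ h1.le (by linarith))

lemma tuoT {a : ℝ} (ha : 0 < a) : TendstoUniformlyOn Tn ψ1 atTop (Ioi a) := by
  apply tendstoUniformlyOn_tsum_nat (summable_aux ha (le_rfl : 2 ≤ 2))
  intro k x hx
  rw [mem_Ioi] at hx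
  rw [Real.norm_eq_abs, abs_of_nonneg (by positivity)]
  exact mono_term ha hx.le k 2

lemma tuoU {a : ℝ} (ha : 0 < a) : TendstoUniformlyOn Un ψ2 atTop (Ioi a) := by
  have hs : Summable (fun k : ℕ => 2 * (1/(a+(k:ℝ))^3)) :=
    (summable_aux ha (by norm_num : 2 ≤ 3)).mul_left 2
  apply tendstoUniformlyOn_tsum_nat hs
  intro k x hx
  rw [mem_Ioi] at hx
  have h1 : (0:ℝ) < x + k := by have := Nat.cast_nonneg (α := ℝ) k; linarith
  rw [Real.norm_eq_abs]
  have e : -2/(x+(k:ℝ))^3 = -(2/(x+(k:ℝ))^3) := by ring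
  rw [e, abs_neg, abs_of_nonneg (by positivity)]
  have := mono_term ha hx.le k 3
  calc 2/(x+(k:ℝ))^3 = 2*(1/(x+(k:ℝ))^3) := by ring
    _ ≤ 2*(1/(a+(k:ℝ))^3) := by linarith


lemma Dn_eq (n : ℕ) (x : ℝ) (hx : x ≠ 0) :
    Dn n x = -(((harmonic n : ℚ) : ℝ) - Real.log n) +
      (-(1/x) + ∑ k ∈ Finset.range n, (1/((k:ℝ)+1) - 1/(x+((k:ℝ)+1)))) := by
  unfold Dn
  rw [Finset.sum_range_succ' (fun k => 1/(x+(k:ℝ))) n, harmonic_cast, Finset.sum_sub_distrib]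
  push_cast
  ring

lemma tendsto_Dn {x : ℝ} (hx : 0 < x) :
    Tendsto (fun n => Dn n x) atTop (𝓝 (ψ0 x)) := by
  have hsum : Summable (fun k : ℕ => 1/((k:ℝ)+1) - 1/(x+((k:ℝ)+1))) := by
    refine Summable.of_nonneg_of_le (psi0_term_nonneg hx) (psi0_term_le hx)
      ((summable_base 2 le_rfl).mul_left x)
  have h1 : Tendsto (fun n : ℕ => -(((harmonic n : ℚ) : ℝ) - Real.log n)) atTop
      (𝓝 (-eulerMascheroniConstant)) := (Real.tendsto_harmonic_sub_log).neg
  have h2 : Tendsto (fun n : ℕ => ∑ k ∈ Finset.range n, (1/((k:ℝ)+1) - 1/(x+((k:ℝ)+1)))) atTop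
      (𝓝 (∑' k : ℕ, (1/((k:ℝ)+1) - 1/(x+((k:ℝ)+1))))) := hsum.hasSum.tendsto_sum_nat
  have h3 := h1.add ((tendsto_const_nhds (x := -(1/x)) (f := atTop)).add h2)
  have := h3.congr (fun n => (Dn_eq n x hx.ne').symm)
  simpa [ψ0, sub_eq_add_neg, add_assoc] using this

lemma tuoD {a b : ℝ} (ha : 0 < a) :
    TendstoUniformlyOn Dn ψ0 atTop (Ioo a b) := by
  have hsumu : Summable (fun k : ℕ => b * (1/((k:ℝ)+1)^2)) :=
    (summable_base 2 le_rfl).mul_left b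
  have hS : TendstoUniformlyOn
      (fun n x => ∑ k ∈ Finset.range n, (1/((k:ℝ)+1) - 1/(x+((k:ℝ)+1))))
      (fun x => ∑' k : ℕ, (1/((k:ℝ)+1) - 1/(x+((k:ℝ)+1)))) atTop (Ioo a b) := by
    apply tendstoUniformlyOn_tsum_nat hsumu
    intro k x hx
    rw [Real.norm_eq_abs, abs_of_nonneg (psi0_term_nonneg (ha.trans hx.1) k)]
    calc 1/((k:ℝ)+1) - 1/(x+((k:ℝ)+1)) ≤ x * (1/((k:ℝ)+1)^2) :=
          psi0_term_le (ha.trans hx.1) k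
      _ ≤ b * (1/((k:ℝ)+1)^2) := by
          have : (0:ℝ) ≤ 1/((k:ℝ)+1)^2 := by positivity
          nlinarith [hx.2]
  have hC : TendstoUniformlyOn (fun (n:ℕ) (_:ℝ) => -(((harmonic n : ℚ) : ℝ) - Real.log n))
      (fun _ => -eulerMascheroniConstant) atTop (Ioo a b) :=
    (Real.tendsto_harmonic_sub_log.neg).tendstoUniformlyOn_const _
  have hI : TendstoUniformlyOn (fun (_:ℕ) (x:ℝ) => -(1/x)) (fun x => -(1/x)) atTop (Ioo a b) := by
    intro u hu
    filter_upwards with n x _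
    exact refl_mem_uniformity hu
  have h := hC.add (hI.add hS)
  have h2 : TendstoUniformlyOn Dn
      ((fun _ => -eulerMascheroniConstant) +
        ((fun x => -(1/x)) + fun x => ∑' k : ℕ, (1/((k:ℝ)+1) - 1/(x+((k:ℝ)+1))))) atTop (Ioo a b) := by
    apply h.congr
    filter_upwards with n x hx
    exact (Dn_eq n x (ha.trans hx.1).ne').symm
  apply h2.congr_right
  intro x hx
  simp only [ψ0, Pi.add_apply]
  ring

lemma hasDerivAt_psi1 {x : ℝ} (hx : 0 < x) : HasDerivAt ψ1 (ψ2 x) x := by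
  apply hasDerivAt_of_tendstoLocallyUniformlyOn (l := atTop) isOpen_Ioi (f := Tn)
      (f' := fun n x => Un n x) ?_ ?_ ?_ (mem_Ioi.2 hx)
  · apply tluo_helper
    intro a b ha
    exact (tuoU ha).mono Ioo_subset_Ioi_self
  · filter_upwards with n y hy
    exact hasDerivAt_Tn (mem_Ioi.1 hy) n
  · intro y hy
    exact (summable_aux (mem_Ioi.1 hy) le_rfl).hasSum.tendsto_sum_nat

lemma hasDerivAt_psi0 {x : ℝ} (hx : 0 < x) : HasDerivAt ψ0 (ψ1 x) x := by
  apply hasDerivAt_of_tendstoLocallyUniformlyOn (l := atTop) isOpen_Ioi (f := Dn)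
      (f' := fun n x => Tn (n+1) x) ?_ ?_ ?_ (mem_Ioi.2 hx)
  · apply tluo_helper
    intro a b ha
    exact (tuo_succ (tuoT ha)).mono Ioo_subset_Ioi_self
  · filter_upwards with n y hy
    exact hasDerivAt_Dn (mem_Ioi.1 hy) n
  · intro y hy
    exact tendsto_Dn (mem_Ioi.1 hy)

lemma Ln_eq_log_GammaSeq {x : ℝ} (hx : 0 < x) {n : ℕ} (hn : 1 ≤ n) :
    Ln n x = Real.log (Real.GammaSeq x n) := by
  have hn0 : (0:ℝ) < n := by exact_mod_cast hn
  have hprod : (0:ℝ) < ∏ j ∈ Finset.range (n+1), (x+(j:ℝ)) :=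
    Finset.prod_pos (fun j _ => by positivity)
  have hfac : (0:ℝ) < (Nat.factorial n : ℝ) := by exact_mod_cast Nat.factorial_pos n
  have hrp : (0:ℝ) < (n:ℝ) ^ x := Real.rpow_pos_of_pos hn0 x
  unfold Ln Real.GammaSeq
  rw [Real.log_div (by positivity) hprod.ne', Real.log_mul hrp.ne' hfac.ne',
      Real.log_rpow hn0, Real.log_prod (fun j _ => by positivity)]

lemma tendsto_Ln {x : ℝ} (hx : 0 < x) :
    Tendsto (fun n => Ln n x) atTop (𝓝 (Real.log (Real.Gamma x))) := by
  have h := (Real.continuousAt_log (Real.Gamma_pos_of_pos hx).ne').tendsto.comp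
    (Real.GammaSeq_tendsto_Gamma x)
  apply Filter.Tendsto.congr' ?_ h
  filter_upwards [eventually_ge_atTop 1] with n hn
  exact (Ln_eq_log_GammaSeq hx hn).symm

lemma hasDerivAt_logGamma {x : ℝ} (hx : 0 < x) :
    HasDerivAt (fun y => Real.log (Real.Gamma y)) (ψ0 x) x := by
  apply hasDerivAt_of_tendstoLocallyUniformlyOn (l := atTop) isOpen_Ioi (f := Ln)
      (f' := fun n x => Dn n x) ?_ ?_ ?_ (mem_Ioi.2 hx)
  · apply tluo_helper
    intro a b ha
    exact tuoD ha
  · filter_upwards with n y hy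
    exact hasDerivAt_Ln (mem_Ioi.1 hy) n
  · intro y hy
    exact tendsto_Ln (mem_Ioi.1 hy)

lemma diffAt_Gamma {x : ℝ} (hx : 0 < x) : DifferentiableAt ℝ Real.Gamma x :=
  Real.differentiableAt_Gamma (fun m => by
    have : (0:ℝ) ≤ m := Nat.cast_nonneg m
    intro h
    rw [h] at hx
    linarith)

lemma deriv_Gamma_eq {x : ℝ} (hx : 0 < x) :
    deriv Real.Gamma x = Real.Gamma x * ψ0 x := by
  have hne : Real.Gamma x ≠ 0 := (Real.Gamma_pos_of_pos hx).ne'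
  have h1 : HasDerivAt (fun y => Real.log (Real.Gamma y))
      (deriv Real.Gamma x / Real.Gamma x) x := (diffAt_Gamma hx).hasDerivAt.log hne
  have e := h1.unique (hasDerivAt_logGamma hx)
  rw [← e]
  field_simp

lemma deriv2_Gamma_eq {x : ℝ} (hx : 0 < x) :
    deriv (deriv Real.Gamma) x = Real.Gamma x * (ψ0 x^2 + ψ1 x) := by
  have hev : deriv Real.Gamma =ᶠ[𝓝 x] fun y => Real.Gamma y * ψ0 y := by
    filter_upwards [Ioi_mem_nhds hx] with y hy
    exact deriv_Gamma_eq hy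
  rw [hev.deriv_eq]
  have hg : HasDerivAt Real.Gamma (Real.Gamma x * ψ0 x) x := by
    have h := (diffAt_Gamma hx).hasDerivAt
    rwa [deriv_Gamma_eq hx] at h
  rw [(hg.fun_mul (hasDerivAt_psi0 hx)).deriv]
  ring

lemma F_eq_psi1 {x : ℝ} (hx : 0 < x) :
    deriv (deriv Real.Gamma) x / Real.Gamma x
      - (deriv Real.Gamma x / Real.Gamma x)^2 = ψ1 x := by
  have hne : Real.Gamma x ≠ 0 := (Real.Gamma_pos_of_pos hx).ne'
  rw [deriv2_Gamma_eq hx, deriv_Gamma_eq hx]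
  field_simp
  ring

lemma psi1_nonneg (x : ℝ) : 0 ≤ ψ1 x := tsum_nonneg (fun k => by positivity)

lemma hasSum_one_div_succ_sq : HasSum (fun n : ℕ => 1/((n:ℝ)+1)^2) (π^2/6) := by
  have h := hasSum_zeta_two
  have h2 := (hasSum_nat_add_iff (f := fun n : ℕ => (1:ℝ)/(n:ℝ)^2) 1).2 (by simpa using h)
  refine h2.congr_fun fun n => ?_
  push_cast
  ring_nf

lemma psi1_one : ψ1 1 = π^2/6 := by
  unfold ψ1
  rw [← hasSum_one_div_succ_sq.tsum_eq]
  congr 1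
  funext k
  ring_nf

lemma psi1_le {y : ℝ} (hy : 1 ≤ y) : ψ1 y ≤ π^2/6 := by
  rw [← psi1_one]
  apply Summable.tsum_le_tsum ?_ (summable_aux (by linarith : (0:ℝ) < y) le_rfl)
    (summable_aux one_pos le_rfl)
  intro k
  exact mono_term one_pos hy k 2

lemma psi1_rec {x : ℝ} (hx : 0 < x) : ψ1 x = 1/x^2 + ψ1 (x+1) := by
  unfold ψ1
  rw [Summable.tsum_eq_zero_add (summable_aux hx le_rfl)]
  push_cast
  congr 1
  · norm_num
  · congr 1
    funext k
    ring_nf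

lemma psi2_one : ψ2 1 = -2 * (∑' n : ℕ, 1 / ((n : ℝ) + 1) ^ 3) := by
  unfold ψ2
  rw [← tsum_mul_left]
  congr 1
  funext k
  rw [add_comm (1:ℝ) (k:ℝ)]
  ring

end SuscAux

/-- with
`κ(β) = (1/2)(1/(β²-1) + (6/(π²β³(β+1)))(Γ''(x)/Γ(x) - (Γ'(x)/Γ(x))²) - β²/(β²-1)²)`
where `x = (β-1)/β`, one has `κ(β) ~ (3/(2π²) - 1/8)(β-1)^{-2}` as `β ↓ 1`
and `κ(β) ~ (6ζ(3)/π² - 1/2) β^{-5}` as `β → ∞`. -/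
theorem susceptibility_asymptotics
    (κ : ℝ → ℝ)
    (hκ : ∀ β : ℝ, κ β =
      (1 / 2) * (1 / (β ^ 2 - 1)
        + (6 / (π ^ 2 * β ^ 3 * (β + 1)))
          * (deriv (deriv Real.Gamma) ((β - 1) / β) / Real.Gamma ((β - 1) / β)
            - (deriv Real.Gamma ((β - 1) / β) / Real.Gamma ((β - 1) / β)) ^ 2)
        - β ^ 2 / (β ^ 2 - 1) ^ 2)) :
    Tendsto (fun β : ℝ => κ β * (β - 1) ^ 2) (𝓝[>] (1 : ℝ))
        (𝓝 (3 / (2 * π ^ 2) - 1 / 8)) ∧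
    Tendsto (fun β : ℝ => κ β * β ^ 5) atTop
        (𝓝 (6 * (∑' n : ℕ, 1 / ((n : ℝ) + 1) ^ 3) / π ^ 2 - 1 / 2)) := by
  have hpi := Real.pi_ne_zero
  constructor
  · -- β → 1⁺
    have hev : (fun β : ℝ => κ β * (β - 1) ^ 2) =ᶠ[𝓝[>] (1:ℝ)] (fun β =>
        (1/2)*((β-1)/(β+1)) + 3/(π^2*β*(β+1))
          + (3*(β-1)^2/(π^2*β^3*(β+1))) * SuscAux.ψ1 ((β-1)/β + 1)
          - (1/2)*(β^2/(β+1)^2)) := by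
      filter_upwards [self_mem_nhdsWithin] with β hβ
      rw [mem_Ioi] at hβ
      have hβ0 : (0:ℝ) < β := by linarith
      have hx : 0 < (β-1)/β := div_pos (by linarith) hβ0
      rw [hκ β, SuscAux.F_eq_psi1 hx, SuscAux.psi1_rec hx]
      have hb1 : β - 1 ≠ 0 := by intro h; rw [sub_eq_zero] at h; simp [h] at hβ
      have hb2 : β + 1 ≠ 0 := by positivity
      have hsq : β^2 - 1 ≠ 0 := by
        have e : β^2 - 1 = (β-1)*(β+1) := by ring
        rw [e]; exact mul_ne_zero hb1 hb2
      field_simp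
      ring
    have l1 : Tendsto (fun β:ℝ => (1/2)*((β-1)/(β+1))) (𝓝[>](1:ℝ)) (𝓝 0) := by
      have hc : ContinuousAt (fun β:ℝ => (1/2)*((β-1)/(β+1))) 1 := by
        apply ContinuousAt.mul continuousAt_const
        exact ContinuousAt.div (by fun_prop) (by fun_prop) (by norm_num)
      have h := hc.tendsto.mono_left (nhdsWithin_le_nhds (s := Ioi (1:ℝ)))
      simpa using h
    have l2 : Tendsto (fun β:ℝ => 3/(π^2*β*(β+1))) (𝓝[>](1:ℝ)) (𝓝 (3/(2*π^2))) := by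
      have hc : ContinuousAt (fun β:ℝ => 3/(π^2*β*(β+1))) 1 := by
        exact ContinuousAt.div continuousAt_const (by fun_prop) (by positivity)
      have h := hc.tendsto.mono_left (nhdsWithin_le_nhds (s := Ioi (1:ℝ)))
      have e : (3:ℝ)/(π^2*1*(1+1)) = 3/(2*π^2) := by ring
      rw [← e]
      exact h
    have l4 : Tendsto (fun β:ℝ => (1/2)*(β^2/(β+1)^2)) (𝓝[>](1:ℝ)) (𝓝 (1/8)) := by
      have hc : ContinuousAt (fun β:ℝ => (1/2)*(β^2/(β+1)^2)) 1 := by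
        apply ContinuousAt.mul continuousAt_const
        exact ContinuousAt.div (by fun_prop) (by fun_prop) (by norm_num)
      have h := hc.tendsto.mono_left (nhdsWithin_le_nhds (s := Ioi (1:ℝ)))
      have e : (1/2:ℝ)*((1:ℝ)^2/((1:ℝ)+1)^2) = 1/8 := by norm_num
      rw [← e]
      exact h
    have l3 : Tendsto (fun β:ℝ => (3*(β-1)^2/(π^2*β^3*(β+1))) * SuscAux.ψ1 ((β-1)/β + 1))
        (𝓝[>](1:ℝ)) (𝓝 0) := by
      have hu : Tendsto (fun β:ℝ => (3*(β-1)^2/(π^2*β^3*(β+1))) * (π^2/6)) (𝓝[>](1:ℝ)) (𝓝 0) := by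
        have hc : ContinuousAt (fun β:ℝ => (3*(β-1)^2/(π^2*β^3*(β+1))) * (π^2/6)) 1 := by
          apply ContinuousAt.mul ?_ continuousAt_const
          exact ContinuousAt.div (by fun_prop) (by fun_prop) (by positivity)
        have h := hc.tendsto.mono_left (nhdsWithin_le_nhds (s := Ioi (1:ℝ)))
        simpa using h
      apply tendsto_of_tendsto_of_tendsto_of_le_of_le' tendsto_const_nhds hu
      · filter_upwards [self_mem_nhdsWithin] with β hβ
        rw [mem_Ioi] at hβ
        have hβ0 : (0:ℝ) < β := by linarith
        exact mul_nonneg (by positivity) (SuscAux.psi1_nonneg _)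
      · filter_upwards [self_mem_nhdsWithin] with β hβ
        rw [mem_Ioi] at hβ
        have hβ0 : (0:ℝ) < β := by linarith
        apply mul_le_mul_of_nonneg_left ?_ (by positivity)
        apply SuscAux.psi1_le
        have : 0 < (β-1)/β := div_pos (by linarith) hβ0
        linarith
    have hsum := ((l1.add l2).add l3).sub l4
    refine Tendsto.congr' hev.symm ?_
    convert hsum using 2
    ring
  · -- β → ∞
    set ζ3 : ℝ := ∑' n : ℕ, 1 / ((n : ℝ) + 1) ^ 3 with hζ3
    have hev : (fun β : ℝ => κ β * β ^ 5) =ᶠ[atTop] (fun β =>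
        (1/2) * (-β^2*(β^2+β-1)/((β-1)^2*(β+1)^2))
          + (3*β/(π^2*(β+1))) * (β * (SuscAux.ψ1 (1-1/β) - π^2/6))) := by
      filter_upwards [eventually_gt_atTop (1:ℝ)] with β hβ
      have hβ0 : (0:ℝ) < β := by linarith
      have hx : 0 < (β-1)/β := div_pos (by linarith) hβ0
      have hxe : (β-1)/β = 1-1/β := by field_simp
      rw [hκ β, SuscAux.F_eq_psi1 hx, hxe]
      have hb1 : β - 1 ≠ 0 := by intro h; rw [sub_eq_zero] at h; simp [h] at hβ
      have hb2 : β + 1 ≠ 0 := by positivity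
      have hsq : β^2 - 1 ≠ 0 := by
        have e : β^2 - 1 = (β-1)*(β+1) := by ring
        rw [e]; exact mul_ne_zero hb1 hb2
      field_simp
      ring
    have h0 : Tendsto (fun β:ℝ => 1/β) atTop (𝓝 0) := by
      simpa using tendsto_inv_atTop_zero
    have hE : Tendsto (fun β:ℝ => (1/2) * (-β^2*(β^2+β-1)/((β-1)^2*(β+1)^2))) atTop
        (𝓝 (-(1/2))) := by
      have hc : ContinuousAt (fun t:ℝ => (1/2) * (-(1+t-t^2)/((1-t)^2*(1+t)^2))) 0 := by
        apply ContinuousAt.mul continuousAt_const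
        exact ContinuousAt.div (by fun_prop) (by fun_prop) (by norm_num)
      have h := (hc.tendsto.comp h0)
      have e : (1/2:ℝ) * (-(1+0-0^2)/((1-0)^2*(1+0)^2)) = -(1/2) := by norm_num
      rw [e] at h
      apply h.congr'
      filter_upwards [eventually_gt_atTop (1:ℝ)] with β hβ
      have hβ0 : (0:ℝ) < β := by linarith
      have hb1 : β - 1 ≠ 0 := by intro h'; rw [sub_eq_zero] at h'; simp [h'] at hβ
      have hb2 : β + 1 ≠ 0 := by positivity
      simp only [Function.comp_apply]
      field_simp
    have hC : Tendsto (fun β:ℝ => 3*β/(π^2*(β+1))) atTop (𝓝 (3/π^2)) := by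
      have hc : ContinuousAt (fun t:ℝ => 3/(π^2*(1+t))) 0 := by
        exact ContinuousAt.div continuousAt_const (by fun_prop) (by positivity)
      have h := (hc.tendsto.comp h0)
      have e : (3:ℝ)/(π^2*(1+0)) = 3/π^2 := by norm_num
      rw [e] at h
      apply h.congr'
      filter_upwards [eventually_gt_atTop (1:ℝ)] with β hβ
      have hβ0 : (0:ℝ) < β := by linarith
      have hb2 : β + 1 ≠ 0 := by positivity
      simp only [Function.comp_apply]
      field_simp
    have hR : Tendsto (fun β:ℝ => β * (SuscAux.ψ1 (1-1/β) - π^2/6)) atTop (𝓝 (2*ζ3)) := by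
      have hd := SuscAux.hasDerivAt_psi1 one_pos
      rw [hasDerivAt_iff_tendsto_slope] at hd
      have hφ : Tendsto (fun β:ℝ => 1-1/β) atTop (𝓝[≠] (1:ℝ)) := by
        rw [tendsto_nhdsWithin_iff]
        constructor
        · have := tendsto_const_nhds (x := (1:ℝ)) (f := atTop (α := ℝ)) |>.sub h0
          simpa using this
        · filter_upwards [eventually_gt_atTop (1:ℝ)] with β hβ
          have hβ0 : (0:ℝ) < β := by linarith
          have : 1/β > 0 := by positivity
          simp only [mem_compl_iff, mem_singleton_iff]
          intro h
          nlinarith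
      have h2 := (hd.comp hφ).neg
      have e2 : -(SuscAux.ψ2 1) = 2*ζ3 := by rw [SuscAux.psi2_one]; ring
      rw [e2] at h2
      apply h2.congr'
      filter_upwards [eventually_gt_atTop (1:ℝ)] with β hβ
      have hβ0 : (0:ℝ) < β := by linarith
      simp only [Function.comp_apply, slope_def_field]
      rw [SuscAux.psi1_one]
      have hβn : β ≠ 0 := hβ0.ne'
      field_simp
      ring
    have hfin := hE.add (hC.mul hR)
    refine Tendsto.congr' hev.symm ?_
    convert hfin using 2
    field_simp
    ring
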